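/- Let F be a totally real number field with ring of integers O, let n ≥ 1, and let α ∈ F be totally positive. Then the set of minimal vectors of f_α on O^n is, up to sign, exactly the set {η e_i : η ∈ M(φ_α), 1 ≤ i ≤ n} ∪ {η(e_i − e_j) : η ∈ M(φ_α), 1 ≤ i < j ≤ n}, where e_1,…,e_n is the standard basis of O^n and M(φ_α) is the set of minimal vectors of the scaled trace form φ_α. -/

import Mathlib

open NumberField

/-- The scaled trace form `φ_α : 𝓞 F → ℚ`, `φ_α(η) = Tr_{F/ℚ}(α η²)`. -/
noncomputable def scaledTraceForm (F : Type*) [Field F] [NumberField F] (α : F)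
    (η : RingOfIntegers F) : ℚ :=
  Algebra.trace ℚ F (α * (η : F) * (η : F))

/-- `η` is a minimal vector for the scaled trace form `φ_α`. -/
def IsMinVecPhi (F : Type*) [Field F] [NumberField F] (α : F) (η : RingOfIntegers F) : Prop :=
  η ≠ 0 ∧ ∀ ξ : RingOfIntegers F, ξ ≠ 0 → scaledTraceForm F α η ≤ scaledTraceForm F α ξ

/-- The `n`-ary form `f_α(x₁,…,xₙ) = Tr_{F/ℚ}(α · A_n(x₁,…,xₙ))` on `(𝓞 F)ⁿ`. -/
noncomputable def fAlpha (F : Type*) [Field F] [NumberField F] (n : ℕ) (α : F)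
    (v : Fin n → RingOfIntegers F) : ℚ :=
  Algebra.trace ℚ F (α * ∑ i, ∑ j ∈ Finset.Ici i, (v i : F) * (v j : F))

/-- `v` is a minimal vector for `f_α`. -/
def IsMinVecF (F : Type*) [Field F] [NumberField F] (n : ℕ) (α : F)
    (v : Fin n → RingOfIntegers F) : Prop :=
  v ≠ 0 ∧ ∀ w : Fin n → RingOfIntegers F, w ≠ 0 → fAlpha F n α v ≤ fAlpha F n α w
open NumberField

theorem aux_twoA (n : ℕ) (F : Type*) [CommRing F] (x : Fin n → F) :
    (∑ i, ∑ j ∈ Finset.Ici i, x i * x j) * 2 = (∑ i, x i)^2 + ∑ i, x i^2 := by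
  have h1 : ∀ i : Fin n, ∑ j ∈ Finset.Ici i, x i * x j
      = x i * x i + ∑ j ∈ Finset.Ioi i, x i * x j := by
    intro i
    rw [Finset.Ici_eq_cons_Ioi, Finset.sum_cons]
  have h2 : ∑ i, ∑ j ∈ Finset.Ioi i, x i * x j = ∑ i, ∑ j ∈ Finset.Iio i, x j * x i :=
    Finset.sum_comm' (fun a b => by simp)
  have h3 : ∀ i : Fin n, ∑ j ∈ Finset.Iio i, x j * x i + ∑ j ∈ Finset.Ici i, x j * x i
      = ∑ j, x j * x i := by
    intro i
    rw [← Finset.sum_union (by simp [Finset.disjoint_left])]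
    congr 1
    ext j
    simp [lt_or_ge]
  have h4 : (∑ i, x i)^2 = ∑ i, ∑ j, x j * x i := by
    rw [sq, Finset.sum_mul_sum]
    exact Finset.sum_comm
  calc (∑ i, ∑ j ∈ Finset.Ici i, x i * x j) * 2
      = ∑ i, (x i * x i + ∑ j ∈ Finset.Ioi i, x i * x j)
        + ∑ i, ∑ j ∈ Finset.Ici i, x i * x j := by
        rw [← Finset.sum_congr rfl (fun i _ => h1 i)]; ring
    _ = ∑ i, x i ^ 2 + (∑ i, ∑ j ∈ Finset.Iio i, x j * x i
        + ∑ i, ∑ j ∈ Finset.Ici i, x j * x i) := by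
        rw [Finset.sum_add_distrib, h2]
        simp only [sq]
        have : ∑ i, ∑ j ∈ Finset.Ici i, x i * x j = ∑ i, ∑ j ∈ Finset.Ici i, x j * x i := by
          apply Finset.sum_congr rfl; intro i _; apply Finset.sum_congr rfl
          intro j _; ring
        rw [this]; ring
    _ = ∑ i, x i ^ 2 + ∑ i, ∑ j, x j * x i := by
        rw [← Finset.sum_add_distrib,
          Finset.sum_congr rfl (fun i _ => h3 i)]
    _ = (∑ i, x i)^2 + ∑ i, x i^2 := by rw [h4]; ring

theorem aux_trace_pos (F : Type*) [Field F] [NumberField F]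
    (hreal : ∀ v : InfinitePlace F, v.IsReal)
    (β : F) (hβ : ∀ σ : F →+* ℝ, 0 < σ β) : 0 < Algebra.trace ℚ F β := by
  have key : (algebraMap ℚ ℂ) (Algebra.trace ℚ F β) = ∑ σ : F →ₐ[ℚ] ℂ, σ β :=
    trace_eq_sum_embeddings ℂ
  have hne : Nonempty (F →ₐ[ℚ] ℂ) := by
    have : 0 < Fintype.card (F →+* ℂ) := by
      rw [NumberField.Embeddings.card F ℂ]
      exact Module.finrank_pos
    exact Nonempty.map (RingHom.equivRatAlgHom (R := F) (S := ℂ))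
      (Fintype.card_pos_iff.mp this)
  have hre : ∀ σ : F →ₐ[ℚ] ℂ, 0 < (σ β).re := by
    intro σ
    have h1 : ComplexEmbedding.IsReal (σ : F →+* ℂ) :=
      InfinitePlace.isReal_mk_iff.mp (hreal (InfinitePlace.mk (σ : F →+* ℂ)))
    have h2 : ((h1.embedding β : ℝ) : ℂ) = σ β := h1.coe_embedding_apply β
    rw [← h2, Complex.ofReal_re]
    exact hβ h1.embedding
  have : 0 < ((Algebra.trace ℚ F β : ℚ) : ℂ).re := by
    rw [show ((Algebra.trace ℚ F β : ℚ) : ℂ) = (algebraMap ℚ ℂ) (Algebra.trace ℚ F β) from rfl,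
      key, Complex.re_sum]
    exact Finset.sum_pos (fun σ _ => hre σ) ⟨Classical.arbitrary _, Finset.mem_univ _⟩
  simpa using this

section phi
variable (F : Type*) [Field F] [NumberField F] (α : F)

theorem aux_phi_zero : scaledTraceForm F α 0 = 0 := by
  simp [scaledTraceForm]

theorem aux_phi_neg (η : RingOfIntegers F) :
    scaledTraceForm F α (-η) = scaledTraceForm F α η := by
  unfold scaledTraceForm
  congr 1
  push_cast
  ring

theorem aux_phi_pos (hreal : ∀ v : InfinitePlace F, v.IsReal) (hα : ∀ σ : F →+* ℝ, 0 < σ α) (η : RingOfIntegers F) (hη : η ≠ 0) :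
    0 < scaledTraceForm F α η := by
  apply aux_trace_pos F hreal
  intro σ
  have h0 : (η : F) ≠ 0 := by
    simpa using hη
  have : σ (η : F) ≠ 0 := fun h => h0 (σ.injective (by simpa using h))
  rw [map_mul, map_mul, mul_assoc]
  exact mul_pos (hα σ) (mul_self_pos.mpr this)

theorem aux_phi_nonneg (hreal : ∀ v : InfinitePlace F, v.IsReal) (hα : ∀ σ : F →+* ℝ, 0 < σ α) (η : RingOfIntegers F) : 0 ≤ scaledTraceForm F α η := by
  by_cases h : η = 0
  · rw [h, aux_phi_zero]
  · exact le_of_lt (aux_phi_pos F α hreal hα η h)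

end phi

theorem aux_decomp (F : Type*) [Field F] [NumberField F] (n : ℕ) (α : F)
    (v : Fin n → RingOfIntegers F) :
    fAlpha F n α v * 2 = scaledTraceForm F α (∑ i, v i)
      + ∑ i, scaledTraceForm F α (v i) := by
  unfold fAlpha scaledTraceForm
  have hx := aux_twoA n F (fun i => (v i : F))
  have h1 : (Algebra.trace ℚ F) (α * ∑ i, ∑ j ∈ Finset.Ici i, (v i : F) * (v j : F)) * 2
      = (Algebra.trace ℚ F) (α * (∑ i, (v i : F))^2 + ∑ i, α * ((v i : F))^2) := by
    rw [mul_two, ← map_add]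
    congr 1
    have : α * (∑ i, ∑ j ∈ Finset.Ici i, (v i : F) * (v j : F))
        + α * (∑ i, ∑ j ∈ Finset.Ici i, (v i : F) * (v j : F))
        = α * ((∑ i, ∑ j ∈ Finset.Ici i, (v i : F) * (v j : F)) * 2) := by ring
    rw [this, hx]
    rw [mul_add, Finset.mul_sum]
  rw [h1, map_add]
  congr 1
  · congr 1
    push_cast
    ring
  · rw [map_sum]
    apply Finset.sum_congr rfl
    intro i _
    congr 1
    ring

theorem aux_sum_two {M : Type*} [AddCommMonoid M] {n : ℕ} {i j : Fin n} (hij : i ≠ j)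
    (a b : M) :
    ∑ k, (if k = i then a else if k = j then b else 0) = a + b := by
  have hsplit : ∀ k : Fin n, (if k = i then a else if k = j then b else 0)
      = (if k = i then a else 0) + (if k = j then b else 0) := by
    intro k
    by_cases h1 : k = i
    · subst h1; simp [hij]
    · by_cases h2 : k = j <;> simp [h1, h2, Ne.symm hij]
  rw [Finset.sum_congr rfl (fun k _ => hsplit k), Finset.sum_add_distrib]
  simp

theorem aux_single (F : Type*) [Field F] [NumberField F] (n : ℕ) (α : F)
    (ξ : RingOfIntegers F) (i : Fin n) :
    fAlpha F n α (fun k => if k = i then ξ else 0) = scaledTraceForm F α ξ := by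
  have hd := aux_decomp F n α (fun k => if k = i then ξ else 0)
  have hs : ∑ k : Fin n, (if k = i then ξ else 0) = ξ := by
    simp
  have hsum : ∑ k : Fin n, scaledTraceForm F α (if k = i then ξ else 0)
      = scaledTraceForm F α ξ := by
    have : ∀ k : Fin n, scaledTraceForm F α (if k = i then ξ else 0)
        = if k = i then scaledTraceForm F α ξ else 0 := by
      intro k; by_cases h : k = i <;> simp [h, aux_phi_zero]
    rw [Finset.sum_congr rfl (fun k _ => this k)]
    simp
  rw [hs, hsum] at hd
  linarith

theorem aux_pair_le {n : ℕ} (g : Fin n → ℚ) (hg : ∀ k, 0 ≤ g k) {i j : Fin n} (hij : i ≠ j) :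
    g i + g j ≤ ∑ k, g k := by
  rw [← Finset.sum_pair hij]
  exact Finset.sum_le_sum_of_subset_of_nonneg (Finset.subset_univ _) (fun k _ _ => hg k)

theorem aux_triple_le {n : ℕ} (g : Fin n → ℚ) (hg : ∀ k, 0 ≤ g k) {i j l : Fin n}
    (hij : i ≠ j) (hil : i ≠ l) (hjl : j ≠ l) :
    g i + g j + g l ≤ ∑ k, g k := by
  have h1 : g i + (g j + g l) ≤ ∑ k, g k := by
    rw [← Finset.sum_pair hjl, ← Finset.sum_insert (by simp [hij, hil])]
    exact Finset.sum_le_sum_of_subset_of_nonneg (Finset.subset_univ _) (fun k _ _ => hg k)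
  linarith

theorem aux_lower (F : Type*) [Field F] [NumberField F]
    (hreal : ∀ v : InfinitePlace F, v.IsReal)
    (n : ℕ) (α : F) (hα : ∀ σ : F →+* ℝ, 0 < σ α)
    (η : RingOfIntegers F) (hη : IsMinVecPhi F α η)
    (w : Fin n → RingOfIntegers F) (hw : w ≠ 0) :
    scaledTraceForm F α η ≤ fAlpha F n α w := by
  obtain ⟨i, hi⟩ : ∃ i, w i ≠ 0 := by
    by_contra h; push_neg at h; exact hw (funext h)
  have hd := aux_decomp F n α w
  have hnn : ∀ k, 0 ≤ scaledTraceForm F α (w k) :=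
    fun k => aux_phi_nonneg F α hreal hα (w k)
  by_cases hs : ∑ k, w k = 0
  · obtain ⟨j, hj, hji⟩ : ∃ j, w j ≠ 0 ∧ j ≠ i := by
      by_contra h; push_neg at h
      have : ∑ k, w k = w i :=
        Finset.sum_eq_single i (fun k _ hk => by_contra fun h' => hk (h k h')) (by simp)
      exact hi (this ▸ hs)
    have h4 := aux_pair_le (fun k => scaledTraceForm F α (w k)) hnn hji
    have h5 := hη.2 (w i) hi
    have h6 := hη.2 (w j) hj
    rw [hs, aux_phi_zero] at hd
    beta_reduce at h4
    linarith
  · have h5 := hη.2 (w i) hi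
    have h7 := hη.2 _ hs
    have h8 : scaledTraceForm F α (w i) ≤ ∑ k, scaledTraceForm F α (w k) :=
      Finset.single_le_sum (fun k _ => hnn k) (Finset.mem_univ i)
    linarith

theorem minVecs_fAlpha_eq
    (F : Type*) [Field F] [NumberField F]
    (hreal : ∀ v : InfinitePlace F, v.IsReal)
    (n : ℕ) (hn : 1 ≤ n)
    (α : F) (hα : ∀ σ : F →+* ℝ, 0 < σ α) :
    ∀ v : Fin n → RingOfIntegers F,
      IsMinVecF F n α v ↔
        ∃ η : RingOfIntegers F, IsMinVecPhi F α η ∧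
          ((∃ i : Fin n, v = fun k => if k = i then η else 0) ∨
           (∃ i j : Fin n, i < j ∧
              v = fun k => if k = i then η else if k = j then -η else 0)) := by
  intro v
  constructor
  · rintro ⟨hv0, hvmin⟩
    obtain ⟨i, hi⟩ : ∃ i, v i ≠ 0 := by
      by_contra h; push_neg at h; exact hv0 (funext h)
    have hmin' : ∀ ξ : RingOfIntegers F, ξ ≠ 0 → fAlpha F n α v ≤ scaledTraceForm F α ξ := by
      intro ξ hξ
      have hne : (fun k : Fin n => if k = i then ξ else 0) ≠ 0 := by
        intro h
        apply hξ
        simpa using congrFun h i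
      have := hvmin _ hne
      rwa [aux_single F n α ξ i] at this
    have hd := aux_decomp F n α v
    have hnn : ∀ k, 0 ≤ scaledTraceForm F α (v k) :=
      fun k => aux_phi_nonneg F α hreal hα (v k)
    by_cases hone : ∀ k, k ≠ i → v k = 0
    · have hs : ∑ k, v k = v i :=
        Finset.sum_eq_single i (fun k _ hk => hone k hk) (by simp)
      have hsum : ∑ k, scaledTraceForm F α (v k) = scaledTraceForm F α (v i) :=
        Finset.sum_eq_single i
          (fun k _ hk => by rw [hone k hk]; exact aux_phi_zero F α) (by simp)
      have hm : fAlpha F n α v = scaledTraceForm F α (v i) := by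
        rw [hs, hsum] at hd; linarith
      refine ⟨v i, ⟨hi, fun ξ hξ => hm ▸ hmin' ξ hξ⟩, Or.inl ⟨i, ?_⟩⟩
      funext k
      by_cases hk : k = i
      · subst hk; simp
      · simp [hk, hone k hk]
    · push_neg at hone
      obtain ⟨j, hji, hj⟩ := hone
      have hik : i ≠ j := Ne.symm hji
      have h4 := aux_pair_le (fun k => scaledTraceForm F α (v k)) hnn hik
      beta_reduce at h4
      have h2 := hmin' _ hi
      have h3 := hmin' _ hj
      have hs : ∑ k, v k = 0 := by
        by_contra hs
        have h1 := hmin' _ hs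
        have h5 := aux_phi_pos F α hreal hα _ hj
        linarith
      rw [hs, aux_phi_zero] at hd
      have h5 : scaledTraceForm F α (v i) = fAlpha F n α v := by linarith
      have h6 : scaledTraceForm F α (v j) = fAlpha F n α v := by linarith
      have hzero : ∀ k, k ≠ i → k ≠ j → v k = 0 := by
        intro k hki hkj
        by_contra hk
        have h7 := aux_triple_le (fun k => scaledTraceForm F α (v k)) hnn
          hik (Ne.symm hki) (Ne.symm hkj)
        beta_reduce at h7
        have h8 := aux_phi_pos F α hreal hα _ hk
        linarith
      have hvj : v j = -(v i) := by
        have hpair : ∑ k, v k = v i + v j := by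
          rw [← Finset.sum_pair hik]
          exact (Finset.sum_subset (Finset.subset_univ _) (fun k _ hk => by
            simp only [Finset.mem_insert, Finset.mem_singleton, not_or] at hk
            exact hzero k hk.1 hk.2)).symm
        rw [hs] at hpair
        exact eq_neg_of_add_eq_zero_right hpair.symm
      rcases lt_or_gt_of_ne hik with hlt | hgt
      · refine ⟨v i, ⟨hi, fun ξ hξ => h5 ▸ hmin' ξ hξ⟩, Or.inr ⟨i, j, hlt, ?_⟩⟩
        funext k
        by_cases hki : k = i
        · subst hki; simp
        · by_cases hkj : k = j
          · subst hkj; simp [hki, hvj]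
          · simp [hki, hkj, hzero k hki hkj]
      · have hvi : v i = -(v j) := by rw [hvj]; ring
        refine ⟨v j, ⟨hj, fun ξ hξ => h6 ▸ hmin' ξ hξ⟩, Or.inr ⟨j, i, hgt, ?_⟩⟩
        funext k
        by_cases hkj : k = j
        · subst hkj; simp [hji]
        · by_cases hki : k = i
          · subst hki; simp [hkj, hvi]
          · simp [hki, hkj, hzero k hki hkj]
  · rintro ⟨η, hη, hcase⟩
    have hηne := hη.1
    rcases hcase with ⟨i, hv⟩ | ⟨i, j, hij, hv⟩
    · subst hv
      refine ⟨?_, ?_⟩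
      · intro h
        exact hηne (by simpa using congrFun h i)
      · intro w hw
        rw [aux_single F n α η i]
        exact aux_lower F hreal n α hα η hη w hw
    · subst hv
      have hijne : i ≠ j := ne_of_lt hij
      refine ⟨?_, ?_⟩
      · intro h
        apply hηne
        have := congrFun h i
        simpa using this
      · intro w hw
        have hd := aux_decomp F n α (fun k => if k = i then η else if k = j then -η else 0)
        have hs : ∑ k : Fin n, (if k = i then η else if k = j then -η else 0) = 0 := by
          rw [aux_sum_two hijne]
          ring
        have hsum : ∑ k : Fin n, scaledTraceForm F α
            (if k = i then η else if k = j then -η else 0)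
            = scaledTraceForm F α η + scaledTraceForm F α η := by
          have : ∀ k : Fin n, scaledTraceForm F α
              (if k = i then η else if k = j then -η else 0)
              = if k = i then scaledTraceForm F α η
                else if k = j then scaledTraceForm F α η else 0 := by
            intro k
            by_cases h1 : k = i
            · simp [h1]
            · by_cases h2 : k = j <;> simp [h1, h2, Ne.symm hijne, aux_phi_zero, aux_phi_neg]
          rw [Finset.sum_congr rfl (fun k _ => this k), aux_sum_two hijne]
        rw [hs, aux_phi_zero] at hd
        rw [hsum] at hd
        have hfv : fAlpha F n α (fun k => if k = i then η else if k = j then -η else 0)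
            = scaledTraceForm F α η := by linarith
        rw [hfv]
        exact aux_lower F hreal n α hα η hη w hw
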